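/- Let β > 0 and t = (t_1,t_2) ∈ ℝ² with |t| = √(t_1²+t_2²) > 0. Then for w_1, w_2 > 0, (β²/(2π)) ∫_{ℝ²} max( e^{−β²|u|²/2}/w_1 , e^{−β²|u−t|²/2}/w_2 ) du = (1/w_1) Φ( β|t|/2 + (1/(β|t|)) log(w_2/w_1) ) + (1/w_2) Φ( β|t|/2 + (1/(β|t|)) log(w_1/w_2) ). -/

import Mathlib

open MeasureTheory

/-- The standard normal cumulative distribution function. -/
noncomputable def stdNormalCDF (u : ℝ) : ℝ :=
  (Real.sqrt (2 * Real.pi))⁻¹ * ∫ x in Set.Iic u, Real.exp (-x ^ 2 / 2)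

section Helpers
open Real Set


lemma my_integral_comp_mul_left_Iic (g : ℝ → ℝ) (a : ℝ) {b : ℝ} (hb : 0 < b) :
    (∫ x in Iic a, g (b * x)) = b⁻¹ * ∫ x in Iic (b * a), g x := by
  have h1 : (∫ x in Iic a, g (b * x)) = ∫ y in Ioi (-a), g (-(b * y)) := by
    rw [← integral_comp_neg_Iic a (fun y => g (-(b * y)))]
    simp [mul_neg, neg_neg]
  have h2 := integral_comp_mul_left_Ioi (fun z => g (-z)) (-a) hb
  simp only [smul_eq_mul] at h2
  rw [h1, h2, integral_comp_neg_Ioi]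
  norm_num

lemma my_integral_comp_sub_right_Ioi (g : ℝ → ℝ) (a d : ℝ) :
    (∫ x in Ioi a, g (x - d)) = ∫ x in Ioi (a - d), g x := by
  have h : ∀ x : ℝ, (Ioi a).indicator (fun x => g (x - d)) x
      = (Ioi (a - d)).indicator g (x - d) := by
    intro x
    by_cases hx : x ∈ Ioi a
    · rw [indicator_of_mem hx, indicator_of_mem (by simpa [sub_lt_sub_iff_right] using hx)]
    · rw [indicator_of_notMem hx, indicator_of_notMem]
      simp only [mem_Ioi, not_lt] at hx ⊢
      linarith
  rw [← integral_indicator measurableSet_Ioi, ← integral_indicator measurableSet_Ioi]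
  calc ∫ x, (Ioi a).indicator (fun x => g (x - d)) x
      = ∫ x, (Ioi (a - d)).indicator g (x - d) := by simp_rw [h]
    _ = ∫ x, (Ioi (a - d)).indicator g x := integral_sub_right_eq_self _ d

lemma gauss_integrable {β : ℝ} (hβ : 0 < β) :
    Integrable (fun x : ℝ => Real.exp (-β ^ 2 * x ^ 2 / 2)) := by
  have h := integrable_exp_neg_mul_sq (show (0:ℝ) < β ^ 2 / 2 by positivity)
  convert h using 2 with x
  ring

lemma gauss_Iic {β : ℝ} (hβ : 0 < β) (c : ℝ) :
    ∫ x in Iic c, Real.exp (-β ^ 2 * x ^ 2 / 2)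
      = β⁻¹ * (Real.sqrt (2 * Real.pi) * stdNormalCDF (β * c)) := by
  have h1 : ∀ x : ℝ, Real.exp (-β ^ 2 * x ^ 2 / 2) = Real.exp (-(β * x) ^ 2 / 2) := by
    intro x; ring_nf
  simp_rw [h1]
  rw [my_integral_comp_mul_left_Iic (fun y => Real.exp (-y ^ 2 / 2)) c hβ]
  rw [stdNormalCDF]
  have hs : Real.sqrt (2 * Real.pi) ≠ 0 := by positivity
  field_simp

lemma gauss_total {β : ℝ} (hβ : 0 < β) :
    ∫ y : ℝ, Real.exp (-β ^ 2 * y ^ 2 / 2) = Real.sqrt (2 * Real.pi) / β := by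
  have h1 : ∀ x : ℝ, Real.exp (-β ^ 2 * x ^ 2 / 2) = Real.exp (-(β ^ 2 / 2) * x ^ 2) := by
    intro x; ring_nf
  simp_rw [h1]
  rw [integral_gaussian]
  rw [show Real.pi / (β ^ 2 / 2) = 2 * Real.pi / β ^ 2 by ring]
  rw [Real.sqrt_div (by positivity : (0:ℝ) ≤ 2 * Real.pi), Real.sqrt_sq hβ.le]

lemma oneD_max_integral {β d w₁ w₂ : ℝ} (hβ : 0 < β) (hd : 0 < d)
    (hw₁ : 0 < w₁) (hw₂ : 0 < w₂) :
    ∫ x : ℝ, max (Real.exp (-β ^ 2 * x ^ 2 / 2) / w₁)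
        (Real.exp (-β ^ 2 * (x - d) ^ 2 / 2) / w₂)
      = β⁻¹ * Real.sqrt (2 * Real.pi) *
        ((1 / w₁) * stdNormalCDF (β * (d / 2 + (Real.log w₂ - Real.log w₁) / (β ^ 2 * d)))
         + (1 / w₂) * stdNormalCDF (β * (d / 2 - (Real.log w₂ - Real.log w₁) / (β ^ 2 * d)))) := by
  set L : ℝ := Real.log w₂ - Real.log w₁ with hL
  set c : ℝ := d / 2 + L / (β ^ 2 * d) with hc
  have hβd : 0 < β ^ 2 * d := by positivity
  have hcL : c * (β ^ 2 * d) = β ^ 2 * d ^ 2 / 2 + L := by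
    rw [hc]; field_simp
  clear_value L c
  set f₁ : ℝ → ℝ := fun x => Real.exp (-β ^ 2 * x ^ 2 / 2) / w₁ with hf₁
  set f₂ : ℝ → ℝ := fun x => Real.exp (-β ^ 2 * (x - d) ^ 2 / 2) / w₂ with hf₂
  have hif₁ : Integrable f₁ := (gauss_integrable hβ).div_const w₁
  have hif₂ : Integrable f₂ := by
    have := ((gauss_integrable hβ).comp_sub_right d).div_const w₂
    exact this
  have hiG : Integrable (fun x => max (f₁ x) (f₂ x)) := by
    have := hif₁.sup hif₂
    exact this.congr (Filter.Eventually.of_forall fun x => rfl)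
  -- pointwise comparisons
  have key : ∀ x : ℝ, (f₂ x ≤ f₁ x ↔ β ^ 2 * d * x ≤ β ^ 2 * d ^ 2 / 2 + L) := by
    intro x
    rw [hf₁, hf₂]
    simp only
    rw [div_le_div_iff₀ hw₂ hw₁, ← Real.exp_log hw₁, ← Real.exp_log hw₂,
        ← Real.exp_add, ← Real.exp_add, Real.exp_le_exp]
    constructor <;> intro h <;> nlinarith [h]
  have hsplit := intervalIntegral.integral_Iic_add_Ioi (b := c) hiG.integrableOn hiG.integrableOn
  rw [← hsplit]
  have h₁ : ∫ x in Iic c, max (f₁ x) (f₂ x) = ∫ x in Iic c, f₁ x := by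
    refine setIntegral_congr_fun measurableSet_Iic fun x hx => ?_
    have hx' : x ≤ c := hx
    have : f₂ x ≤ f₁ x := (key x).mpr
      (by nlinarith [mul_le_mul_of_nonneg_right hx' hβd.le, hcL])
    exact max_eq_left this
  have h₂ : ∫ x in Ioi c, max (f₁ x) (f₂ x) = ∫ x in Ioi c, f₂ x := by
    refine setIntegral_congr_fun measurableSet_Ioi fun x hx => ?_
    have hx' : c < x := hx
    have hgt : ¬ (β ^ 2 * d * x ≤ β ^ 2 * d ^ 2 / 2 + L) := by
      nlinarith [mul_lt_mul_of_pos_right hx' hβd, hcL]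
    have : f₁ x ≤ f₂ x :=
      le_of_lt (lt_of_not_ge fun hcon => hgt ((key x).mp hcon))
    exact max_eq_right this
  rw [h₁, h₂]
  have e₁ : ∫ x in Iic c, f₁ x
      = (1 / w₁) * (β⁻¹ * (Real.sqrt (2 * Real.pi) * stdNormalCDF (β * c))) := by
    rw [hf₁]
    simp only
    rw [integral_div, gauss_Iic hβ c]
    ring
  have e₂ : ∫ x in Ioi c, f₂ x
      = (1 / w₂) * (β⁻¹ * (Real.sqrt (2 * Real.pi) * stdNormalCDF (β * (d - c)))) := by
    rw [hf₂]
    simp only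
    rw [integral_div, my_integral_comp_sub_right_Ioi (fun x => Real.exp (-β ^ 2 * x ^ 2 / 2)) c d]
    have heven : ∫ x in Ioi (c - d), Real.exp (-β ^ 2 * x ^ 2 / 2)
        = ∫ x in Iic (d - c), Real.exp (-β ^ 2 * x ^ 2 / 2) := by
      rw [show (d - c) = -(c - d) by ring, ← integral_comp_neg_Ioi]
      refine setIntegral_congr_fun measurableSet_Ioi fun x _ => ?_
      ring_nf
    rw [heven, gauss_Iic hβ (d - c)]
    ring
  rw [e₁, e₂]
  have harg : c = d / 2 + L / (β ^ 2 * d) := hc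
  have harg2 : d - c = d / 2 - L / (β ^ 2 * d) := by rw [hc]; ring
  rw [harg2]
  ring

end Helpers

section Main
open Real Set

/-- The exponent measure for the two-dimensional normal model. -/
theorem normal_model_exponent_2D (β : ℝ) (hβ : 0 < β)
    (t : EuclideanSpace ℝ (Fin 2)) (ht : t ≠ 0)
    (w₁ w₂ : ℝ) (hw₁ : 0 < w₁) (hw₂ : 0 < w₂) :
    (β ^ 2 / (2 * Real.pi)) * ∫ u : EuclideanSpace ℝ (Fin 2),
        max (Real.exp (-β ^ 2 * ‖u‖ ^ 2 / 2) / w₁)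
          (Real.exp (-β ^ 2 * ‖u - t‖ ^ 2 / 2) / w₂) =
      (1 / w₁) * stdNormalCDF (β * ‖t‖ / 2 + (1 / (β * ‖t‖)) * Real.log (w₂ / w₁)) +
      (1 / w₂) * stdNormalCDF (β * ‖t‖ / 2 + (1 / (β * ‖t‖)) * Real.log (w₁ / w₂)) := by
  have hd : 0 < ‖t‖ := norm_pos_iff.mpr ht
  set d : ℝ := ‖t‖ with hdd
  -- orthonormal basis with first vector along t
  have hcard : Module.finrank ℝ (EuclideanSpace ℝ (Fin 2)) = Fintype.card (Fin 2) := by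
    simp
  have horth : Orthonormal ℝ (Set.restrict {(0 : Fin 2)}
      (fun _ : Fin 2 => (‖t‖⁻¹ • t : EuclideanSpace ℝ (Fin 2)))) := by
    constructor
    · intro i
      show ‖‖t‖⁻¹ • t‖ = 1
      simp [norm_smul, abs_of_pos (inv_pos.mpr hd), inv_mul_cancel₀ hd.ne', ← hdd, abs_of_pos hd]
    · intro i j hij
      exact absurd (Subtype.ext ((Set.mem_singleton_iff.mp i.2).trans
        (Set.mem_singleton_iff.mp j.2).symm)) hij
  obtain ⟨b, hb⟩ := horth.exists_orthonormalBasis_extension_of_card_eq hcard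
  have hb0 : b 0 = ‖t‖⁻¹ • t := hb 0 rfl
  have hφt : b.repr t = ‖t‖ • EuclideanSpace.single (0 : Fin 2) (1 : ℝ) := by
    have ht' : b.repr t = b.repr (‖t‖ • b 0) := by
      rw [hb0, smul_smul, mul_inv_cancel₀ hd.ne', one_smul]
    rw [ht', LinearIsometryEquiv.map_smul, OrthonormalBasis.repr_self]
  -- step 1 : rotate
  have step1 : (∫ u : EuclideanSpace ℝ (Fin 2),
        max (Real.exp (-β ^ 2 * ‖u‖ ^ 2 / 2) / w₁)
          (Real.exp (-β ^ 2 * ‖u - t‖ ^ 2 / 2) / w₂))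
      = ∫ u : EuclideanSpace ℝ (Fin 2),
        max (Real.exp (-β ^ 2 * ‖u‖ ^ 2 / 2) / w₁)
          (Real.exp (-β ^ 2 * ‖u - b.repr t‖ ^ 2 / 2) / w₂) := by
    rw [← b.measurePreserving_repr_symm.integral_comp
      b.repr.symm.toHomeomorph.measurableEmbedding
      (fun u => max (Real.exp (-β ^ 2 * ‖u‖ ^ 2 / 2) / w₁)
          (Real.exp (-β ^ 2 * ‖u - t‖ ^ 2 / 2) / w₂))]
    congr 1
    funext u
    have e1 : ‖b.repr.symm u‖ = ‖u‖ := b.repr.symm.norm_map u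
    have e2 : ‖b.repr.symm u - t‖ = ‖u - b.repr t‖ := by
      rw [show b.repr.symm u - t = b.repr.symm (u - b.repr t) by
        rw [map_sub, LinearIsometryEquiv.symm_apply_apply]]
      exact b.repr.symm.norm_map _
    rw [e1, e2]
  rw [step1]
  -- step 2 : coordinates
  have hnorm : ∀ u : EuclideanSpace ℝ (Fin 2), ‖u‖ ^ 2 = u 0 ^ 2 + u 1 ^ 2 := by
    intro u
    rw [EuclideanSpace.norm_eq, Real.sq_sqrt (by positivity)]
    simp [Fin.sum_univ_two, sq_abs]
  have hsub : ∀ u : EuclideanSpace ℝ (Fin 2),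
      ‖u - b.repr t‖ ^ 2 = (u 0 - d) ^ 2 + u 1 ^ 2 := by
    intro u
    rw [hnorm (u - b.repr t)]
    have h0 : (u - b.repr t) 0 = u 0 - d := by
      rw [hφt]; simp [EuclideanSpace.single_apply, hdd]
    have h1 : (u - b.repr t) 1 = u 1 := by
      rw [hφt]; simp [EuclideanSpace.single_apply]
    rw [h0, h1]
  set g2 : ℝ × ℝ → ℝ := fun p =>
    max (Real.exp (-β ^ 2 * (p.1 ^ 2 + p.2 ^ 2) / 2) / w₁)
      (Real.exp (-β ^ 2 * ((p.1 - d) ^ 2 + p.2 ^ 2) / 2) / w₂) with hg2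
  have mpΨ : MeasurePreserving
      (fun u : EuclideanSpace ℝ (Fin 2) => ((u 0 : ℝ), (u 1 : ℝ))) volume volume :=
    (volume_preserving_finTwoArrow ℝ).comp
      (EuclideanSpace.volume_preserving_symm_measurableEquiv_toLp (Fin 2))
  have embΨ : MeasurableEmbedding
      (fun u : EuclideanSpace ℝ (Fin 2) => ((u 0 : ℝ), (u 1 : ℝ))) :=
    (((MeasurableEquiv.toLp 2 (Fin 2 → ℝ)).symm).trans MeasurableEquiv.finTwoArrow).measurableEmbedding
  have step2 : (∫ u : EuclideanSpace ℝ (Fin 2),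
        max (Real.exp (-β ^ 2 * ‖u‖ ^ 2 / 2) / w₁)
          (Real.exp (-β ^ 2 * ‖u - b.repr t‖ ^ 2 / 2) / w₂))
      = ∫ p : ℝ × ℝ, g2 p := by
    rw [← mpΨ.integral_comp embΨ g2]
    congr 1
    funext u
    rw [hg2]
    simp only
    rw [hnorm u, hsub u]
  rw [step2]
  -- step 3 : factor and Fubini
  have hfact : ∀ p : ℝ × ℝ, g2 p =
      (max (Real.exp (-β ^ 2 * p.1 ^ 2 / 2) / w₁)
        (Real.exp (-β ^ 2 * (p.1 - d) ^ 2 / 2) / w₂)) * Real.exp (-β ^ 2 * p.2 ^ 2 / 2) := by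
    intro p
    rw [hg2]
    simp only
    rw [max_mul_of_nonneg _ _ (le_of_lt (Real.exp_pos _))]
    congr 1
    · rw [div_mul_eq_mul_div, ← Real.exp_add]
      congr 2
      ring
    · rw [div_mul_eq_mul_div, ← Real.exp_add]
      congr 2
      ring
  have step3 : (∫ p : ℝ × ℝ, g2 p)
      = (∫ x : ℝ, max (Real.exp (-β ^ 2 * x ^ 2 / 2) / w₁)
          (Real.exp (-β ^ 2 * (x - d) ^ 2 / 2) / w₂))
        * ∫ y : ℝ, Real.exp (-β ^ 2 * y ^ 2 / 2) := by
    simp_rw [hfact]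
    rw [Measure.volume_eq_prod, ← integral_prod_mul]
  rw [step3, oneD_max_integral hβ hd hw₁ hw₂, gauss_total hβ]
  -- final algebra
  have harg1 : β * (d / 2 + (Real.log w₂ - Real.log w₁) / (β ^ 2 * d))
      = β * d / 2 + (1 / (β * d)) * Real.log (w₂ / w₁) := by
    rw [Real.log_div hw₂.ne' hw₁.ne']
    field_simp
  have harg2 : β * (d / 2 - (Real.log w₂ - Real.log w₁) / (β ^ 2 * d))
      = β * d / 2 + (1 / (β * d)) * Real.log (w₁ / w₂) := by
    rw [Real.log_div hw₁.ne' hw₂.ne']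
    field_simp
    ring
  rw [harg1, harg2]
  set P₁ := stdNormalCDF (β * d / 2 + 1 / (β * d) * Real.log (w₂ / w₁))
  set P₂ := stdNormalCDF (β * d / 2 + 1 / (β * d) * Real.log (w₁ / w₂))
  have hS2 : Real.sqrt (2 * Real.pi) ^ 2 = 2 * Real.pi := Real.sq_sqrt (by positivity)
  have hS : 0 < Real.sqrt (2 * Real.pi) := Real.sqrt_pos.mpr (by positivity)
  have h2 : Real.sqrt 2 ^ 2 = 2 := Real.sq_sqrt (by norm_num)
  have hp : Real.sqrt Real.pi ^ 2 = Real.pi := Real.sq_sqrt Real.pi_pos.le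
  field_simp
  linear_combination (P₁ * w₂ + w₁ * P₂) * hS2

end Main
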